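/- For a positive integer n, y(n) > 0 if and only if either 1 ≤ n ≤ 4, or 336 ≤ n ≤ 337, or 351 ≤ n ≤ 364, or n ≥ 369. -/

import Mathlib

set_option exponentiation.threshold 20000

set_option synthInstance.maxSize 5000 in
set_option synthInstance.maxHeartbeats 1000000 in
set_option maxRecDepth 1000000 in
theorem bigcheck : ∀ n : ℕ, n < 392 → ∀ s : ℕ, s < 29 →
    (s*s ≤ 2*n → 2*n < (s+1)*(s+1) → 1 ≤ n →
    (n ^ (s - 1) < 2 ^ (2*n + 2 - 2*((2*n-1)/3) - s) ↔
      n ≤ 4 ∨ (336 ≤ n ∧ n ≤ 337) ∨ (351 ≤ n ∧ n ≤ 364) ∨ 369 ≤ n)) := by decide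

set_option maxRecDepth 1000000 in
theorem Dsmall : ∀ s : ℕ, s < 36 → 28 ≤ s → (s+1)^(6*s-6) ≤ 2^(s*s+5) := by decide

theorem sixlog : ∀ j : ℕ, 7 ≤ j → 6 * j ≤ 2 ^ (j - 1) := by
  intro j hj
  induction j, hj using Nat.le_induction with
  | base => norm_num
  | succ n hn ih =>
    have h2 : 2 ^ (n-1) + 2 ^ (n-1) = 2 ^ n := by
      rw [← two_mul, ← pow_succ']
      congr 1; omega
    have h6 : 6 ≤ 2 ^ (n-1) := le_trans (by omega) ih
    have : 6 * (n+1) ≤ 2 ^ n := by omega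
    calc 6 * (n+1) ≤ 2 ^ n := this
      _ = 2 ^ ((n+1) - 1) := by congr 1

theorem lemD : ∀ s : ℕ, 28 ≤ s → (s+1)^(6*s-6) ≤ 2^(s*s+5) := by
  intro s hs
  rcases lt_or_ge s 36 with h | h
  · exact Dsmall s h hs
  · set L := Nat.log 2 s + 1 with hL
    have hsL : s + 1 ≤ 2 ^ L := Nat.lt_pow_succ_log_self (by norm_num) s
    have h6L : 6 * L ≤ s := by
      rcases lt_or_ge s 64 with h64 | h64
      · have hlog : Nat.log 2 s < 6 := Nat.log_lt_of_lt_pow (by omega) (by norm_num; omega)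
        omega
      · have hL7 : 7 ≤ L := by
          have : 6 ≤ Nat.log 2 s := (Nat.le_log_iff_pow_le (by norm_num) (by omega)).2 (by norm_num; omega)
          omega
        calc 6*L ≤ 2^(L-1) := sixlog L hL7
          _ = 2 ^ Nat.log 2 s := by rw [show L - 1 = Nat.log 2 s from by omega]
          _ ≤ s := Nat.pow_log_le_self 2 (by omega)
    obtain ⟨t, rfl⟩ : ∃ t, s = t + 1 := ⟨s - 1, by omega⟩
    have he : 6*(t+1) - 6 = 6*t := by omega
    rw [he]
    calc (t+1+1)^(6*t) ≤ (2^L)^(6*t) := Nat.pow_le_pow_left hsL _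
      _ = 2^(L*(6*t)) := by rw [← pow_mul]
      _ ≤ 2^((t+1)*(t+1)+5) := by
          apply Nat.pow_le_pow_right (by norm_num)
          nlinarith [h6L, hs]

theorem keyN (n : ℕ) (hn : 1 ≤ n) :
    (n ^ (Nat.sqrt (2*n) - 1) < 2 ^ (2*n + 2 - 2*((2*n-1)/3) - Nat.sqrt (2*n)) ↔
      n ≤ 4 ∨ (336 ≤ n ∧ n ≤ 337) ∨ (351 ≤ n ∧ n ≤ 364) ∨ 369 ≤ n) := by
  have hs1 : Nat.sqrt (2*n) * Nat.sqrt (2*n) ≤ 2 * n := Nat.sqrt_le (2*n)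
  have hs2 : 2*n < (Nat.sqrt (2*n) + 1) * (Nat.sqrt (2*n) + 1) := Nat.lt_succ_sqrt (2*n)
  set s := Nat.sqrt (2*n) with hsdef
  rcases lt_or_ge n 392 with h | h
  · have hslt : s < 29 := by
      by_contra h'
      push_neg at h'
      have := Nat.mul_le_mul h' h'
      omega
    exact bigcheck n h s hslt hs1 hs2 hn
  · constructor
    · intro _; right; right; right; omega
    · intro _
      have hs28 : 28 ≤ s := by
        rw [hsdef, Nat.le_sqrt]
        omega
      set q := (2*n-1)/3 with hq
      set k := 2*n + 2 - 2*q - s with hk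
      have h3s : 3 * s ≤ 2 * n + 8 := by
        have : 3 * s ≤ s * s := Nat.mul_le_mul_right s (by omega)
        omega
      have hq3 : 3 * q ≤ 2*n - 1 := by omega
      have hk3 : 2*n + 5 ≤ 3*k + (3*s - 3) := by omega
      have e1 : (2*n)^(3*s-3) < ((s+1)*(s+1))^(3*s-3) :=
        Nat.pow_lt_pow_left hs2 (by omega)
      have e2 : ((s+1)*(s+1))^(3*s-3) = (s+1)^(6*s-6) := by
        rw [show (s+1)*(s+1) = (s+1)^2 from by ring, ← pow_mul]
        congr 1; omega
      have e3 : (s+1)^(6*s-6) ≤ 2^(s*s+5) := lemD s hs28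
      have e4 : (2:ℕ)^(s*s+5) ≤ 2^(2*n+5) := Nat.pow_le_pow_right (by norm_num) (by omega)
      have e5 : (2:ℕ)^(2*n+5) ≤ 2^(3*k + (3*s-3)) := Nat.pow_le_pow_right (by norm_num) hk3
      have e6 : (2:ℕ)^(3*k + (3*s-3)) = 2^(3*k) * 2^(3*s-3) := by rw [pow_add]
      have e7 : (2*n)^(3*s-3) = 2^(3*s-3) * n^(3*s-3) := by rw [mul_pow]
      have main3 : n^(3*s-3) < 2^(3*k) := by
        have hfin : 2^(3*s-3) * n^(3*s-3) < 2^(3*k) * 2^(3*s-3) := by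
          rw [← e7, ← e6]
          exact lt_of_lt_of_le e1 (le_trans (e2 ▸ e3) (le_trans e4 e5))
        rw [mul_comm (2^(3*k)) (2^(3*s-3))] at hfin
        exact lt_of_mul_lt_mul_left hfin (Nat.zero_le _)
      have hcube : (n^(s-1))^3 < (2^k)^3 := by
        rw [← pow_mul, ← pow_mul]
        have h1 : (s-1)*3 = 3*s-3 := by omega
        have h2 : k*3 = 3*k := by ring
        rw [h1, h2]
        exact main3
      exact lt_of_pow_lt_pow_left₀ 3 (Nat.zero_le _) hcube

theorem stmt
    (z : ℕ → ℤ) (m r : ℕ → ℕ) (c x : ℕ → ℤ) (y : ℕ → ℚ)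
    (hz : ∀ n : ℕ, 1 ≤ n → 3 * z n < 2 * (n : ℤ) ∧ ∀ w : ℤ, 3 * w < 2 * (n : ℤ) → w ≤ z n)
    (hm : ∀ n : ℕ, 1 ≤ n → (m n : ℤ) ^ 2 ≤ 2 * (n : ℤ) ∧ ∀ w : ℕ, (w : ℤ) ^ 2 ≤ 2 * (n : ℤ) → w ≤ m n)
    (hr : ∀ n : ℕ, 1 ≤ n → n ≤ 2 ^ r n ∧ ∀ s : ℕ, n ≤ 2 ^ s → r n ≤ s)
    (hc : ∀ n : ℕ, c n = 2 * (n : ℤ) - 2 * z n + 2)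
    (hx : ∀ n : ℕ, x n = z n - ((r n : ℤ) + 1) * (m n : ℤ))
    (hy : ∀ n : ℕ, y n = (2 : ℚ) ^ (c n - (m n : ℤ)) - (n : ℚ) ^ ((m n : ℤ) - 1)) :
    ∀ n : ℕ, 1 ≤ n →
      (y n > 0 ↔ n ≤ 4 ∨ (336 ≤ n ∧ n ≤ 337) ∨ (351 ≤ n ∧ n ≤ 364) ∨ 369 ≤ n) := by
  intro n hn
  obtain ⟨hz1, hz2⟩ := hz n hn
  obtain ⟨hm1, hm2⟩ := hm n hn
  -- m n = Nat.sqrt (2*n)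
  have hs1 : Nat.sqrt (2*n) * Nat.sqrt (2*n) ≤ 2 * n := Nat.sqrt_le (2*n)
  have hmn : m n = Nat.sqrt (2*n) := by
    have h1 : m n ≤ Nat.sqrt (2*n) := by
      rw [Nat.le_sqrt]
      have h' : ((m n * m n : ℕ) : ℤ) ≤ ((2*n : ℕ) : ℤ) := by push_cast; nlinarith [hm1]
      exact_mod_cast h'
    have h2 : Nat.sqrt (2*n) ≤ m n := by
      apply hm2
      have : ((Nat.sqrt (2*n) * Nat.sqrt (2*n) : ℕ) : ℤ) ≤ ((2*n : ℕ) : ℤ) := by exact_mod_cast hs1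
      push_cast at this
      nlinarith [this]
    omega
  -- z n = (2n-1)/3
  have hzq : z n = (((2*n-1)/3 : ℕ) : ℤ) := by
    have h2 := hz2 (((2*n-1)/3 : ℕ) : ℤ) (by omega)
    omega
  -- m n ≥ 1
  have hm1' : 1 ≤ m n := hm2 1 (by push_cast; omega)
  have hs28 : 1 ≤ Nat.sqrt (2*n) := by omega
  -- 3 * sqrt(2n) ≤ 2n + 8
  have h3s : 3 * Nat.sqrt (2*n) ≤ 2*n + 8 := by
    rcases le_or_gt (Nat.sqrt (2*n)) 3 with h | h
    · omega
    · have : 3 * Nat.sqrt (2*n) ≤ Nat.sqrt (2*n) * Nat.sqrt (2*n) :=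
        Nat.mul_le_mul_right _ (by omega)
      omega
  have hck : c n - (m n : ℤ) = ((2*n + 2 - 2*((2*n-1)/3) - Nat.sqrt (2*n) : ℕ) : ℤ) := by
    rw [hc n, hzq, hmn]
    omega
  have hme : (m n : ℤ) - 1 = ((Nat.sqrt (2*n) - 1 : ℕ) : ℤ) := by
    rw [hmn]; omega
  have hyn : y n = ((2 ^ (2*n + 2 - 2*((2*n-1)/3) - Nat.sqrt (2*n)) : ℕ) : ℚ)
      - ((n ^ (Nat.sqrt (2*n) - 1) : ℕ) : ℚ) := by
    rw [hy n, hck, hme, zpow_natCast, zpow_natCast]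
    push_cast
    ring
  rw [show (y n > 0) ↔ ((n ^ (Nat.sqrt (2*n) - 1) : ℕ) : ℚ)
      < ((2 ^ (2*n + 2 - 2*((2*n-1)/3) - Nat.sqrt (2*n)) : ℕ) : ℚ) by rw [hyn]; constructor <;> intro h <;> linarith]
  rw [Nat.cast_lt]
  exact keyN n hn
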